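/- Let γ and 2n be positive integers with γ dividing 2n. Write γ = p₁^{α₁} ⋯ p_r^{α_r}. The number of residues modulo γ attained by integers a with a² ≡ 1 (mod 4n) is 2^{ρ̃(γ)}, where ρ̃(γ) = ρ(γ) if γ is odd and ρ(γ/2) if γ is even. -/

import Mathlib

open Finset

lemma crt2 {m n x1 x2 : ℤ} (h : IsCoprime m n) : ∃ x, m ∣ x - x1 ∧ n ∣ x - x2 := by
  obtain ⟨u, v, huv⟩ := h
  refine ⟨x2*(u*m) + x1*(v*n), ⟨u*(x2-x1), by linear_combination x1 * huv⟩,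
    ⟨v*(x1-x2), by linear_combination x2 * huv⟩⟩

lemma crt_finset (s : Finset ℕ) (f : ℕ → ℤ) (r : ℕ → ℤ)
    (h : (s : Set ℕ).Pairwise (Function.onFun IsCoprime f)) :
    ∃ a : ℤ, ∀ p ∈ s, f p ∣ a - r p := by
  classical
  induction s using Finset.induction with
  | empty => exact ⟨0, by simp⟩
  | @insert q s hq ih =>
    obtain ⟨a, ha⟩ := ih (h.mono (by intro x hx; simp at hx ⊢; tauto))
    have hcop : IsCoprime (f q) (∏ p ∈ s, f p) := by
      refine IsCoprime.prod_right fun p hp => ?_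
      exact h (by simp) (by simp [hp]) (by rintro rfl; exact hq hp)
    obtain ⟨x, hx1, hx2⟩ := crt2 (x1 := r q) (x2 := a) hcop
    refine ⟨x, fun p hp => ?_⟩
    rcases Finset.mem_insert.mp hp with rfl | hp
    · exact hx1
    · have h1 : f p ∣ x - a := (Finset.dvd_prod_of_mem f hp).trans hx2
      simpa [sub_add_sub_cancel] using dvd_add h1 (ha p hp)

def sqcnt (m : ℕ) : ℕ := ((range m).filter (fun b : ℕ => (m : ℤ) ∣ (b : ℤ)^2 - 1)).card

lemma sqcnt_eq_card (m : ℕ) [NeZero m] :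
    sqcnt m = Fintype.card {x : ZMod m // x^2 = 1} := by
  rw [Fintype.card_subtype, sqcnt]
  refine Finset.card_bij (fun b _ => (b : ZMod m)) ?_ ?_ ?_
  · intro b hb
    simp only [mem_filter, mem_range] at hb
    simp only [mem_filter, mem_univ, true_and]
    have := (ZMod.intCast_zmod_eq_zero_iff_dvd ((b:ℤ)^2 - 1) m).mpr hb.2
    push_cast at this
    linear_combination this
  · intro a ha b hb hab
    simp only [mem_filter, mem_range] at ha hb
    rwa [ZMod.natCast_eq_natCast_iff', Nat.mod_eq_of_lt ha.1, Nat.mod_eq_of_lt hb.1] at hab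
  · intro x hx
    simp only [mem_filter, mem_univ, true_and] at hx
    refine ⟨x.val, ?_, by simp [ZMod.natCast_val, ZMod.cast_id]⟩
    simp only [mem_filter, mem_range]
    refine ⟨ZMod.val_lt x, ?_⟩
    rw [← ZMod.intCast_zmod_eq_zero_iff_dvd]
    push_cast
    rw [ZMod.natCast_val, ZMod.cast_id]
    rw [hx]; ring

lemma sqcnt_mul {m n : ℕ} [NeZero m] [NeZero n] (h : Nat.Coprime m n) :
    sqcnt (m * n) = sqcnt m * sqcnt n := by
  have : NeZero (m * n) := ⟨Nat.mul_ne_zero (NeZero.ne m) (NeZero.ne n)⟩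
  rw [sqcnt_eq_card, sqcnt_eq_card, sqcnt_eq_card, ← Fintype.card_prod]
  refine Fintype.card_congr ?_
  let c := ZMod.chineseRemainder h
  refine (c.toEquiv.subtypeEquiv fun x => ?_).trans
    (Equiv.subtypeProdEquivProd (p := fun a : ZMod m => a^2=1) (q := fun b : ZMod n => b^2=1))
  show x^2 = 1 ↔ (c x).1^2 = 1 ∧ (c x).2^2 = 1
  rw [← c.injective.eq_iff, map_pow, map_one]
  simp [Prod.ext_iff]

lemma isCoprime_two_pow_odd {m : ℤ} (hm : Odd m) (j : ℕ) : IsCoprime ((2:ℤ)^j) m := by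
  obtain ⟨t, rfl⟩ := hm
  exact IsCoprime.pow_left ⟨-t, 1, by ring⟩

lemma odd_prime_pow_split {p k : ℕ} (hp : p.Prime) (hp2 : p ≠ 2) {B : ℤ}
    (h : (p:ℤ)^k ∣ (B-1)*(B+1)) : (p:ℤ)^k ∣ B - 1 ∨ (p:ℤ)^k ∣ B + 1 := by
  have hpZ : Prime (p:ℤ) := Nat.prime_iff_prime_int.mp hp
  by_cases hd : (p:ℤ) ∣ B + 1
  · have hnd : ¬ (p:ℤ) ∣ B - 1 := by
      intro hc
      have h2 : (p:ℤ) ∣ 2 := by simpa using dvd_sub hd hc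
      have := Int.le_of_dvd (by norm_num) h2
      have := hp.two_le
      omega
    right
    exact (IsCoprime.pow_left (hpZ.coprime_iff_not_dvd.mpr hnd)).dvd_of_dvd_mul_left h
  · left
    exact (IsCoprime.pow_left (hpZ.coprime_iff_not_dvd.mpr hd)).dvd_of_dvd_mul_right h

lemma two_pow_split {k : ℕ} {B : ℤ} (hB : Odd B) (h : (2:ℤ)^(k+1) ∣ (B-1)*(B+1)) :
    (2:ℤ)^k ∣ B - 1 ∨ (2:ℤ)^k ∣ B + 1 := by
  rcases Nat.eq_zero_or_pos k with rfl | hk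
  · left; simp
  obtain ⟨j, rfl⟩ : ∃ j, k = j + 1 := ⟨k - 1, by omega⟩
  obtain ⟨c, hc⟩ := hB  -- B = 2c + 1
  have hcc : (2:ℤ)^j ∣ c * (c+1) := by
    rw [show ((B-1)*(B+1)) = 2^2*(c*(c+1)) from by rw [hc]; ring,
      show ((2:ℤ))^(j+1+1) = 2^2 * 2^j from by ring] at h
    exact (mul_dvd_mul_iff_left (by norm_num : ((2:ℤ)^2) ≠ 0)).mp h
  rcases Int.even_or_odd c with hce | hco
  · left
    obtain ⟨d, hd⟩ := hce
    have hodd : Odd (c + 1) := by rw [hd]; exact ⟨d, by ring⟩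
    have : (2:ℤ)^j ∣ c := (isCoprime_two_pow_odd hodd j).dvd_of_dvd_mul_left
      (by rwa [mul_comm] at hcc)
    obtain ⟨t, ht⟩ := this
    exact ⟨t, by rw [hc, ht]; ring⟩
  · right
    have : (2:ℤ)^j ∣ c + 1 := (isCoprime_two_pow_odd hco j).dvd_of_dvd_mul_left hcc
    obtain ⟨t, ht⟩ := this
    exact ⟨t, by rw [hc]; linear_combination 2 * ht⟩


lemma sqcnt_one : sqcnt 1 = 1 := by decide

lemma sqcnt_four : sqcnt 4 = 2 := by decide

lemma sqcnt_odd_prime_pow {p k : ℕ} (hp : p.Prime) (hp2 : p ≠ 2) (hk : 0 < k) :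
    sqcnt (p^k) = 2 := by
  have hp3 : 3 ≤ p := by have := hp.two_le; omega
  have hq3 : 3 ≤ p ^ k := le_trans hp3 (Nat.le_self_pow hk.ne' p)
  have hset : (range (p^k)).filter (fun b : ℕ => ((p^k : ℕ) : ℤ) ∣ (b : ℤ)^2 - 1)
      = {1, p^k - 1} := by
    ext b
    simp only [mem_filter, mem_range, mem_insert, mem_singleton]
    constructor
    · rintro ⟨hb, hd⟩
      have hd' : (p:ℤ)^k ∣ ((b:ℤ) - 1) * ((b:ℤ) + 1) := by
        push_cast at hd; convert hd using 1; ring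
      have hq : ((p:ℤ))^k = ((p^k : ℕ) : ℤ) := by push_cast; ring
      rcases odd_prime_pow_split hp hp2 hd' with h1 | h1
      · left
        have hbq : (b:ℤ) < ((p^k:ℕ):ℤ) := by exact_mod_cast hb
        rcases lt_trichotomy ((b:ℤ) - 1) 0 with hlt | h0 | hgt
        · exfalso
          have hb0 : (b:ℤ) = 0 := by omega
          rw [hb0] at h1
          have h1' : (p:ℤ)^k ∣ 1 := by
            have := h1.neg_right
            simpa using this
          have := Int.le_of_dvd one_pos h1'
          rw [hq] at this; omega
        · omega
        · exfalso
          have := Int.le_of_dvd hgt h1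
          rw [hq] at this; omega
      · right
        have hpos : (0:ℤ) < (b:ℤ) + 1 := by positivity
        have hle := Int.le_of_dvd hpos h1
        rw [hq] at hle
        omega
    · rintro (rfl | rfl)
      · exact ⟨by omega, by simp⟩
      · refine ⟨by omega, ?_⟩
        have : ((p^k - 1 : ℕ) : ℤ) = ((p^k : ℕ) : ℤ) - 1 := by
          have : 1 ≤ p ^ k := by omega
          push_cast [this]; ring
        rw [this]
        exact ⟨((p^k : ℕ) : ℤ) - 2, by ring⟩
  rw [sqcnt, hset]
  rw [Finset.card_insert_of_notMem (by simp; omega), Finset.card_singleton]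


lemma sqcnt_two_pow {k : ℕ} (hk : 3 ≤ k) : sqcnt (2^k) = 4 := by
  obtain ⟨j, rfl⟩ : ∃ j, k = j + 3 := ⟨k - 3, by omega⟩
  have hP4 : (4:ℕ) ≤ 2^(j+2) := by
    calc (4:ℕ) = 2^2 := rfl
    _ ≤ 2^(j+2) := Nat.pow_le_pow_right (by norm_num) (by omega)
  have hdbl : (2:ℕ)^(j+3) = 2*2^(j+2) := by ring
  have hPZ : ((2:ℤ))^(j+2) = ((2^(j+2) : ℕ) : ℤ) := by push_cast; ring
  have hset : (range (2^(j+3))).filter (fun b : ℕ => ((2^(j+3) : ℕ) : ℤ) ∣ (b : ℤ)^2 - 1)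
      = {1, 2^(j+2) - 1, 2^(j+2) + 1, 2^(j+3) - 1} := by
    ext b
    simp only [mem_filter, mem_range, mem_insert, mem_singleton]
    constructor
    · rintro ⟨hb, hd⟩
      have hd0 : (2:ℤ)^(j+3) ∣ (b:ℤ)^2 - 1 := by exact_mod_cast hd
      have hd' : (2:ℤ)^((j+2)+1) ∣ ((b:ℤ) - 1) * ((b:ℤ) + 1) := by
        rw [show ((b:ℤ)-1)*((b:ℤ)+1) = (b:ℤ)^2-1 by ring]
        exact hd0
      have hodd : Odd (b:ℤ) := by
        have h2 : (2:ℤ) ∣ ((b:ℤ) - 1) * ((b:ℤ) + 1) :=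
          dvd_trans ⟨2^(j+2), by ring⟩ hd'
        rcases Int.even_or_odd (b:ℤ) with he | ho
        · exfalso
          obtain ⟨t, ht⟩ := he
          obtain ⟨s, hs⟩ := h2
          rw [ht] at hs
          have : 4*(t*t) - 1 = 2*s := by linear_combination hs
          omega
        · exact ho
      have hbq : (b:ℤ) < ((2^(j+3):ℕ):ℤ) := by exact_mod_cast hb
      have hcast : ((2^(j+3):ℕ):ℤ) = 2 * ((2^(j+2):ℕ):ℤ) := by push_cast; ring
      rcases two_pow_split hodd hd' with h1 | h1
      · obtain ⟨t, ht⟩ := h1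
        rw [hPZ] at ht
        have hPpos : (0:ℤ) < ((2^(j+2):ℕ):ℤ) := by exact_mod_cast Nat.two_pow_pos (j+2)
        have ht0 : 0 ≤ t := by nlinarith
        have ht1 : t ≤ 1 := by nlinarith
        interval_cases t
        · left; omega
        · right; right; left; omega
      · obtain ⟨t, ht⟩ := h1
        rw [hPZ] at ht
        have hPpos : (0:ℤ) < ((2^(j+2):ℕ):ℤ) := by exact_mod_cast Nat.two_pow_pos (j+2)
        have hP4' : (4:ℤ) ≤ ((2^(j+2):ℕ):ℤ) := by exact_mod_cast hP4
        have ht0 : 1 ≤ t := by nlinarith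
        have ht1 : t ≤ 2 := by nlinarith
        interval_cases t
        · right; left; omega
        · right; right; right; omega
    · have hcast1 : ((2^(j+2) - 1 : ℕ) : ℤ) = 2^(j+2) - 1 := by
        have : (1:ℕ) ≤ 2^(j+2) := by omega
        push_cast [this]; ring
      have hcast2 : ((2^(j+3) - 1 : ℕ) : ℤ) = 2*2^(j+2) - 1 := by
        have : (1:ℕ) ≤ 2^(j+3) := Nat.one_le_two_pow
        push_cast [this]; ring
      rintro (rfl | rfl | rfl | rfl)
      · exact ⟨by omega, by simp⟩
      · refine ⟨by omega, ?_⟩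
        rw [hcast1]
        exact ⟨2^(j+1) - 1, by push_cast; ring⟩
      · refine ⟨by omega, ?_⟩
        push_cast
        exact ⟨2^(j+1) + 1, by ring⟩
      · refine ⟨by omega, ?_⟩
        rw [hcast2]
        exact ⟨2^(j+3) - 2, by push_cast; ring⟩
  rw [sqcnt, hset]
  have h1 : (1:ℕ) ≠ 2^(j+2) - 1 := by omega
  have h2 : (1:ℕ) ≠ 2^(j+2) + 1 := by omega
  have h3 : (1:ℕ) ≠ 2^(j+3) - 1 := by omega
  have h4 : (2^(j+2) - 1:ℕ) ≠ 2^(j+2) + 1 := by omega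
  have h5 : (2^(j+2) - 1:ℕ) ≠ 2^(j+3) - 1 := by omega
  have h6 : (2^(j+2) + 1:ℕ) ≠ 2^(j+3) - 1 := by omega
  rw [Finset.card_insert_of_notMem (by simp [h1, h2, h3]),
    Finset.card_insert_of_notMem (by simp [h4, h5]),
    Finset.card_insert_of_notMem (by simp [h6]), Finset.card_singleton]


lemma sqcnt_odd : ∀ (u : ℕ), 0 < u → Odd u → sqcnt u = 2 ^ u.primeFactors.card := by
  intro u
  induction u using Nat.recOnPosPrimePosCoprime with
  | prime_pow p n hp hn =>
    intro _ hodd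
    have hp2 : p ≠ 2 := by
      rintro rfl
      rw [Nat.odd_iff] at hodd
      have : 2 ∣ 2^n := dvd_pow_self 2 hn.ne'
      omega
    rw [sqcnt_odd_prime_pow hp hp2 hn, Nat.primeFactors_prime_pow hn.ne' hp]
    simp
  | zero => intro h; omega
  | one => intro _ _; simpa using sqcnt_one
  | coprime a b ha hb hab iha ihb =>
    intro hpos hodd
    rw [Nat.odd_mul] at hodd
    haveI : NeZero a := ⟨by omega⟩
    haveI : NeZero b := ⟨by omega⟩
    rw [sqcnt_mul hab, iha (by omega) hodd.1, ihb (by omega) hodd.2,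
      Nat.Coprime.primeFactors_mul hab,
      Finset.card_union_of_disjoint (Nat.Coprime.disjoint_primeFactors hab), pow_add]

lemma sqcnt_half (γ : ℕ) (h2 : 2 ∣ γ) :
    sqcnt (2*γ) = 2 * ((range γ).filter (fun b : ℕ => ((2*γ:ℕ) : ℤ) ∣ (b:ℤ)^2 - 1)).card := by
  obtain ⟨g, rfl⟩ := h2
  have hr : range (2*(2*g)) = range (2*g) ∪ (range (2*g)).map (addLeftEmbedding (2*g)) := by
    rw [← Finset.range_add]; congr 1; ring
  rw [sqcnt, hr, Finset.filter_union, Finset.filter_map,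
    Finset.card_union_of_disjoint, Finset.card_map]
  · have hcong : (range (2*g)).filter
        ((fun b : ℕ => ((2*(2*g):ℕ) : ℤ) ∣ (b:ℤ)^2 - 1) ∘ (addLeftEmbedding (2*g)))
        = (range (2*g)).filter (fun b : ℕ => ((2*(2*g):ℕ) : ℤ) ∣ (b:ℤ)^2 - 1) := by
      apply Finset.filter_congr
      intro b _
      simp only [Function.comp_apply, addLeftEmbedding_apply]
      have key : ((2*g + b : ℕ) : ℤ)^2 - 1 = ((b:ℤ)^2 - 1) + ((2*(2*g):ℕ):ℤ) * ((g:ℤ) + b) := by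
        push_cast; ring
      constructor
      · intro h
        rw [key] at h
        exact (dvd_add_right (dvd_mul_right _ _)).mp (by rwa [add_comm] at h)
      · intro h
        rw [key]
        exact dvd_add h (dvd_mul_right _ _)
    rw [hcong]
    omega
  · rw [Finset.disjoint_left]
    intro x hx hx2
    simp only [mem_filter, mem_range] at hx
    simp only [Finset.mem_filter, Finset.mem_map, Finset.mem_range, addLeftEmbedding_apply] at hx2
    obtain ⟨c, ⟨hc, -⟩, hceq⟩ := hx2
    omega

lemma count_main (γ : ℕ) (hγ : 0 < γ) :
    ((range γ).filter (fun b : ℕ => ((if 2 ∣ γ then 2*γ else γ : ℕ) : ℤ) ∣ (b:ℤ)^2 - 1)).card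
      = 2 ^ (if 2 ∣ γ then (γ/2).primeFactors.card else γ.primeFactors.card) := by
  by_cases h2 : 2 ∣ γ
  · rw [if_pos h2, if_pos h2]
    set k := γ.factorization 2 with hk
    set u := γ / 2^k with hu
    have hk1 : 1 ≤ k := Nat.Prime.factorization_pos_of_dvd Nat.prime_two hγ.ne' h2
    have hγeq : 2^k * u = γ := Nat.ordProj_mul_ordCompl_eq_self γ 2
    have hu2 : ¬ 2 ∣ u := Nat.not_dvd_ordCompl Nat.prime_two hγ.ne'
    have huodd : Odd u := Nat.odd_iff.mpr (by omega)
    have hupos : 0 < u := by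
      rcases Nat.eq_zero_or_pos u with h | h
      · omega
      · exact h
    haveI : NeZero u := ⟨hupos.ne'⟩
    haveI : NeZero (2^(k+1)) := ⟨(Nat.two_pow_pos (k+1)).ne'⟩
    have hcop : Nat.Coprime (2^(k+1)) u :=
      Nat.Coprime.pow_left _ ((Nat.Prime.coprime_iff_not_dvd Nat.prime_two).mpr hu2)
    have h2γ : 2*γ = 2^(k+1) * u := by rw [← hγeq]; ring
    have key : sqcnt (2*γ) = sqcnt (2^(k+1)) * 2 ^ u.primeFactors.card := by
      rw [h2γ, sqcnt_mul hcop, sqcnt_odd u hupos huodd]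
    have hhalf := sqcnt_half γ h2
    rcases eq_or_lt_of_le hk1 with h1 | hk2
    · -- k = 1
      have hγeq1 : 2*u = γ := by rw [← hγeq, ← h1]; ring
      have hγ2 : γ / 2 = u := by omega
      have h4 : (2:ℕ)^(k+1) = 4 := by rw [← h1]; norm_num
      rw [h4, sqcnt_four] at key
      rw [hγ2]
      omega
    · -- k ≥ 2
      have h4 : sqcnt (2^(k+1)) = 4 := sqcnt_two_pow (by omega)
      rw [h4] at key
      have hpow : (2:ℕ)^k = 2*2^(k-1) := by
        conv_lhs => rw [show k = (k-1)+1 by omega]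
        rw [pow_succ]; ring
      have hγeq2 : γ = 2*(2^(k-1)*u) := by rw [← hγeq, hpow]; ring
      have hγ2 : γ / 2 = 2^(k-1) * u := by omega
      have hωγ2 : (γ/2).primeFactors.card = 1 + u.primeFactors.card := by
        rw [hγ2, Nat.Coprime.primeFactors_mul
            (Nat.Coprime.pow_left _ ((Nat.Prime.coprime_iff_not_dvd Nat.prime_two).mpr hu2)),
          Nat.primeFactors_prime_pow (by omega) Nat.prime_two,
          Finset.card_union_of_disjoint]
        · simp
        · simp only [Finset.disjoint_singleton_left, Nat.mem_primeFactors]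
          rintro ⟨-, hd, -⟩
          exact hu2 hd
      rw [hωγ2]
      have hp2 : 2 ^ (1 + u.primeFactors.card) = 2 * 2 ^ u.primeFactors.card := by
        rw [pow_add, pow_one]
      omega
  · rw [if_neg h2, if_neg h2]
    exact sqcnt_odd γ hγ (Nat.odd_iff.mpr (by omega))

lemma pairwise_pp {s : Finset ℕ} (hs : ∀ p ∈ s, p.Prime) (e : ℕ → ℕ) :
    (s : Set ℕ).Pairwise (Function.onFun IsCoprime fun p => (p:ℤ)^(e p)) := by
  intro p hp q hq hne
  exact IsCoprime.pow
    (Nat.isCoprime_iff_coprime.mpr ((Nat.coprime_primes (hs p hp) (hs q hq)).mpr hne))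

lemma prod_primeFactors_pow_int {N : ℕ} (hN0 : N ≠ 0) :
    ∏ p ∈ N.primeFactors, (p:ℤ)^(N.factorization p) = (N:ℤ) := by
  have h : ∏ p ∈ N.primeFactors, p ^ N.factorization p = N := by
    conv_rhs => rw [← Nat.factorization_prod_pow_eq_self hN0]
    rw [Nat.prod_factorization_eq_prod_primeFactors]
  exact_mod_cast congrArg (Nat.cast : ℕ → ℤ) h

lemma surj_step (n γ b : ℕ) (hn : 0 < n) (hγ : 0 < γ) (hdvd : γ ∣ 2 * n) (hbγ : b < γ)
    (hb : ((if 2 ∣ γ then 2*γ else γ : ℕ) : ℤ) ∣ (b:ℤ)^2 - 1) :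
    ∃ a : ℕ, (a < 2*n ∧ (4 * n : ℤ) ∣ (a : ℤ) ^ 2 - 1) ∧ a % γ = b := by
  set γ' : ℕ := if 2 ∣ γ then 2*γ else γ with hγ'
  have hγγ' : γ ∣ γ' := by
    rw [hγ']; split
    · exact dvd_mul_left γ 2
    · exact dvd_rfl
  set N : ℕ := 4*n with hN
  have hN0 : N ≠ 0 := by omega
  have hγN : γ ∣ N := hdvd.trans ⟨2, by omega⟩
  set r : ℕ → ℤ := fun p => if (p:ℤ)^(γ.factorization p) ∣ (b:ℤ) - 1 then 1 else -1 with hr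
  have hsprime : ∀ p ∈ N.primeFactors, p.Prime := fun p hp => Nat.prime_of_mem_primeFactors hp
  obtain ⟨a, ha⟩ := crt_finset N.primeFactors (fun p => (p:ℤ)^(N.factorization p)) r
    (pairwise_pp hsprime _)
  have hprodb : ((b:ℤ)^2 - 1) = ((b:ℤ) - 1) * ((b:ℤ) + 1) := by ring
  -- (1) N ∣ a² - 1
  have h1 : (N:ℤ) ∣ a^2 - 1 := by
    rw [← prod_primeFactors_pow_int hN0]
    apply Finset.prod_dvd_of_coprime (pairwise_pp hsprime _)
    intro p hp
    have hrp : r p = 1 ∨ r p = -1 := by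
      by_cases hx : (p:ℤ)^(γ.factorization p) ∣ (b:ℤ) - 1 <;> simp [hr, hx]
    have hsq : a^2 - 1 = (a - r p) * (a + r p) := by
      rcases hrp with h | h <;> rw [h] <;> ring
    rw [hsq]
    exact dvd_mul_of_dvd_left (ha p hp) _
  -- (2) γ ∣ a - b
  have h2 : (γ:ℤ) ∣ a - (b:ℤ) := by
    rw [← prod_primeFactors_pow_int hγ.ne']
    apply Finset.prod_dvd_of_coprime
      (pairwise_pp (fun p hp => Nat.prime_of_mem_primeFactors hp) _)
    intro p hp
    have hpp : p.Prime := Nat.prime_of_mem_primeFactors hp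
    have hpd : p ∣ γ := Nat.dvd_of_mem_primeFactors hp
    set k := γ.factorization p with hk
    have hk1 : 1 ≤ k := hpp.factorization_pos_of_dvd hγ.ne' hpd
    have hps : p ∈ N.primeFactors := Nat.primeFactors_mono hγN hN0 hp
    have hke : k ≤ N.factorization p := by
      have := (Nat.factorization_le_iff_dvd hγ.ne' hN0).mpr hγN
      exact this p
    have hcrt : (p:ℤ)^k ∣ a - r p :=
      dvd_trans (pow_dvd_pow _ hke) (ha p hps)
    have hrb : (p:ℤ)^k ∣ (b:ℤ) - r p := by
      by_cases hif : (p:ℤ)^k ∣ (b:ℤ) - 1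
      · rw [hr]; simp only [← hk, if_pos hif]; exact hif
      · have hrpneg : r p = -1 := by rw [hr]; simp only [← hk, if_neg hif]
        rw [hrpneg]
        have hpkγ : (p:ℤ)^k ∣ (γ:ℤ) := by
          exact_mod_cast Int.natCast_dvd_natCast.mpr (hk ▸ Nat.ordProj_dvd γ p)
        have hbb : ((γ':ℕ):ℤ) ∣ ((b:ℤ) - 1) * ((b:ℤ) + 1) := by rw [← hprodb]; exact hb
        by_cases hp2 : p = 2
        · -- p = 2
          subst hp2
          have h2γ : 2 ∣ γ := hpd
          have hγ'2 : γ' = 2*γ := by rw [hγ', if_pos h2γ]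
          have h2k1 : (2:ℤ)^(k+1) ∣ ((b:ℤ) - 1) * ((b:ℤ) + 1) := by
            refine dvd_trans ?_ hbb
            rw [hγ'2]
            push_cast
            rw [pow_succ, mul_comm ((2:ℤ)^k) 2]
            exact mul_dvd_mul_left 2 (by exact_mod_cast hpkγ)
          have hbodd : Odd (b:ℤ) := by
            have h2d : (2:ℤ) ∣ (b:ℤ)^2 - 1 := by
              refine dvd_trans ?_ hb
              rw [hγ'2]; push_cast; exact ⟨(γ:ℤ), by ring⟩
            rcases Int.even_or_odd (b:ℤ) with he | ho
            · exfalso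
              obtain ⟨t, ht⟩ := he
              obtain ⟨s, hs⟩ := h2d
              rw [ht] at hs
              have : 4*(t*t) - 1 = 2*s := by linear_combination hs
              omega
            · exact ho
          rcases two_pow_split hbodd h2k1 with h | h
          · exact absurd (by exact_mod_cast h) hif
          · simpa using h
        · -- p odd
          have hpk : (p:ℤ)^k ∣ ((b:ℤ) - 1) * ((b:ℤ) + 1) :=
            dvd_trans (hpkγ.trans (by exact_mod_cast Int.natCast_dvd_natCast.mpr hγγ')) hbb
          rcases odd_prime_pow_split hpp hp2 hpk with h | h
          · exact absurd h hif
          · simpa using h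
    have : a - (b:ℤ) = (a - r p) - ((b:ℤ) - r p) := by ring
    rw [this]
    exact dvd_sub hcrt hrb
  -- (3) assemble
  have h2n0 : (0:ℤ) < 2*n := by positivity
  set Q : ℤ := a / (2*(n:ℤ)) with hQ
  set A0 : ℤ := a % (2*(n:ℤ)) with hA0
  have hA0eq : A0 = a - 2*n*Q := by rw [hA0, hQ, Int.emod_def]
  have hA0nonneg : 0 ≤ A0 := Int.emod_nonneg a (by omega)
  have hA0lt : A0 < 2*n := Int.emod_lt_of_pos a h2n0
  refine ⟨A0.toNat, ⟨?_, ?_⟩, ?_⟩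
  · omega
  · have hc : ((A0.toNat : ℤ)) = A0 := Int.toNat_of_nonneg hA0nonneg
    rw [hc, hA0eq]
    have h1' : (4*(n:ℤ)) ∣ a^2 - 1 := by
      have : ((N:ℕ):ℤ) = 4*(n:ℤ) := by rw [hN]; push_cast; ring
      rw [← this]; exact h1
    have key : (a - 2*n*Q)^2 - 1 = (a^2 - 1) - (4*n)*(Q*(a - n*Q)) := by ring
    rw [key]
    exact dvd_sub h1' (Dvd.intro _ rfl)
  · have hc : ((A0.toNat : ℤ)) = A0 := Int.toNat_of_nonneg hA0nonneg
    have hγA0 : (γ:ℤ) ∣ A0 - b := by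
      rw [hA0eq]
      have h2nγ : (γ:ℤ) ∣ 2*n*Q := by
        have : (γ:ℤ) ∣ 2*(n:ℤ) := by exact_mod_cast Int.natCast_dvd_natCast.mpr hdvd
        exact Dvd.dvd.mul_right this Q
      have : a - 2*n*Q - b = (a - b) - 2*n*Q := by ring
      rw [this]
      exact dvd_sub h2 h2nγ
    have hmod : (A0.toNat : ℤ) % γ = (b:ℤ) := by
      rw [hc]
      have hmodeq : A0 % γ = (b:ℤ) % γ := Int.ModEq.symm (Int.modEq_iff_dvd.mpr hγA0)
      rw [hmodeq, Int.emod_eq_of_lt (by positivity) (by exact_mod_cast hbγ)]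
    have : ((A0.toNat % γ : ℕ) : ℤ) = (b:ℤ) := by
      rw [Int.natCast_mod]; push_cast; rw [hmod]
    exact_mod_cast this

lemma image_eq (n γ : ℕ) (hn : 0 < n) (hγ : 0 < γ) (hdvd : γ ∣ 2 * n) :
    ((Finset.range (2 * n)).filter
        (fun a : ℕ => (4 * n : ℤ) ∣ (a : ℤ) ^ 2 - 1)).image (· % γ)
      = (range γ).filter (fun b : ℕ => ((if 2 ∣ γ then 2*γ else γ : ℕ) : ℤ) ∣ (b:ℤ)^2 - 1) := by
  ext b
  simp only [Finset.mem_image, mem_filter, mem_range]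
  constructor
  · rintro ⟨a, ⟨ha2n, ha⟩, rfl⟩
    refine ⟨Nat.mod_lt _ hγ, ?_⟩
    set q : ℕ := a / γ with hq
    have hmd : γ * q + a % γ = a := Nat.div_add_mod a γ
    have hBeq : ((a % γ : ℕ) : ℤ) = (a:ℤ) - (γ:ℤ)*q := by
      have := congrArg (Nat.cast : ℕ → ℤ) hmd
      rw [Nat.cast_add, Nat.cast_mul] at this
      linarith
    have key : ((a % γ : ℕ) : ℤ)^2 - 1
        = ((a:ℤ)^2 - 1) - (γ:ℤ)*q*((a:ℤ) + ((a % γ : ℕ) : ℤ)) := by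
      rw [hBeq]; ring
    by_cases h2 : 2 ∣ γ
    · rw [if_pos h2]
      -- a odd
      have h4 : (4:ℤ) ∣ (a:ℤ)^2 - 1 := dvd_trans ⟨(n:ℤ), by push_cast; ring⟩ ha
      have haodd : a % 2 = 1 := by
        rcases Nat.even_or_odd a with he | ho
        · exfalso
          obtain ⟨t, ht⟩ := he
          obtain ⟨s, hs⟩ := h4
          rw [ht] at hs
          push_cast at hs
          have : 4*((t:ℤ)*(t:ℤ)) - 1 = 4*s := by linear_combination hs
          omega
        · exact Nat.odd_iff.mp ho
      have hbodd : (a % γ) % 2 = 1 := by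
        rw [Nat.mod_mod_of_dvd a h2] at *
        exact haodd
      have hsum : (2:ℤ) ∣ (a:ℤ) + ((a % γ : ℕ):ℤ) := by
        have : 2 ∣ a + a % γ := by omega
        exact_mod_cast Int.natCast_dvd_natCast.mpr this
      obtain ⟨s, hs⟩ := hsum
      have h2γ4n : ((2*γ:ℕ):ℤ) ∣ (a:ℤ)^2 - 1 := by
        refine dvd_trans ?_ ha
        obtain ⟨c, hc⟩ := hdvd
        have hc' : 2*(n:ℤ) = (γ:ℤ)*c := by exact_mod_cast congrArg (Nat.cast : ℕ → ℤ) hc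
        exact ⟨(c:ℤ), by push_cast; linarith⟩
      rw [key]
      refine dvd_sub h2γ4n ?_
      refine ⟨(q:ℤ)*s, ?_⟩
      rw [hs]; push_cast; ring
    · rw [if_neg h2]
      have hγ4n : (γ:ℤ) ∣ (a:ℤ)^2 - 1 := by
        refine dvd_trans ?_ ha
        obtain ⟨c, hc⟩ := hdvd
        have hc' : 2*(n:ℤ) = (γ:ℤ)*c := by exact_mod_cast congrArg (Nat.cast : ℕ → ℤ) hc
        exact ⟨2*(c:ℤ), by push_cast; linarith⟩
      rw [key]
      exact dvd_sub hγ4n ⟨(q:ℤ)*((a:ℤ) + ((a % γ : ℕ):ℤ)), by push_cast; ring⟩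
  · rintro ⟨hbγ, hb⟩
    obtain ⟨a, ⟨h1, h2⟩, h3⟩ := surj_step n γ b hn hγ hdvd hbγ hb
    exact ⟨a, ⟨h1, h2⟩, h3⟩

/-- The number of residues modulo `γ` attained by integers `a` with `a² ≡ 1 (mod 4n)`
(where `γ ∣ 2n`) is `2^{ρ̃(γ)}`. -/
theorem stmt_3 (n γ : ℕ) (hn : 0 < n) (hγ : 0 < γ) (hdvd : γ ∣ 2 * n) :
    (((Finset.range (2 * n)).filter
        (fun a : ℕ => (4 * n : ℤ) ∣ (a : ℤ) ^ 2 - 1)).image (· % γ)).card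
      = 2 ^ (if 2 ∣ γ then (γ / 2).primeFactors.card else γ.primeFactors.card) := by
  rw [image_eq n γ hn hγ hdvd, count_main γ hγ]
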